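/- Let (X, d) be a metric space, φ : X → ℝ a Kantorovich potential in the sense that γ₁ ∈ ∂^cφ(γ₀), and let γ : [0,1] → X be a constant-speed geodesic. Then for every t ∈ (0, 1], φ(γ₀) − φ(γ_t) ≥ d(γ₀, γ₁)² · (t − t²/2). In particular, dividing by d(γ₀, γ_t) = t · d(γ₀, γ₁) and letting t ↓ 0, the descending slope of φ at γ₀ along the geodesic is at least d(γ₀, γ₁). -/
import Mathlib


/-- The `c`-transform with cost `c(x,y) = d(x,y)²/2`. -/
noncomputable def cTransform {X : Type*} [MetricSpace X] (ψ : X → EReal) : X → EReal :=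
  fun y => ⨅ x : X, (((dist x y) ^ 2 / 2 : ℝ) : EReal) - ψ x

theorem statement10 {X : Type*} [MetricSpace X] (φ : X → ℝ)
    (hconc : cTransform (cTransform (fun x : X => (φ x : EReal))) = fun x : X => (φ x : EReal))
    (γ : ℝ → X)
    (hgeod : ∀ s ∈ Set.Icc (0:ℝ) 1, ∀ t ∈ Set.Icc (0:ℝ) 1,
      dist (γ s) (γ t) = |s - t| * dist (γ 0) (γ 1))
    (hy : (φ (γ 0) : EReal) + cTransform (fun z : X => (φ z : EReal)) (γ 1)
        = (((dist (γ 0) (γ 1)) ^ 2 / 2 : ℝ) : EReal)) :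
    (∀ t ∈ Set.Ioc (0:ℝ) 1,
      dist (γ 0) (γ 1) ^ 2 * (t - t ^ 2 / 2) ≤ φ (γ 0) - φ (γ t)) ∧
    (dist (γ 0) (γ 1) : EReal) ≤
      Filter.liminf (fun t : ℝ => (((φ (γ 0) - φ (γ t)) / dist (γ 0) (γ t) : ℝ) : EReal))
        (nhdsWithin 0 (Set.Ioi 0)) := by
  set D : ℝ := dist (γ 0) (γ 1) with hD
  -- The c-transform of φ at γ 1 is finite, with value D²/2 - φ (γ 0).
  have hc1 : cTransform (fun z : X => (φ z : EReal)) (γ 1)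
      = ((D ^ 2 / 2 - φ (γ 0) : ℝ) : EReal) := by
    set b := cTransform (fun z : X => (φ z : EReal)) (γ 1) with hb
    clear_value b
    induction b with
    | bot => simp at hy
    | coe r =>
        rw [← EReal.coe_add, EReal.coe_eq_coe_iff] at hy
        rw [EReal.coe_eq_coe_iff]; linarith
    | top => simp at hy
  -- Part 1
  have part1 : ∀ t ∈ Set.Ioc (0:ℝ) 1,
      D ^ 2 * (t - t ^ 2 / 2) ≤ φ (γ 0) - φ (γ t) := by
    intro t ht
    have ht0 : (0:ℝ) ≤ t := le_of_lt ht.1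
    have ht1 : t ≤ 1 := ht.2
    have hdist : dist (γ 1) (γ t) = (1 - t) * D := by
      rw [hgeod 1 (by constructor <;> norm_num) t ⟨ht0, ht1⟩, abs_of_nonneg (by linarith)]
    have hle : (φ (γ t) : EReal)
        ≤ (((dist (γ 1) (γ t)) ^ 2 / 2 : ℝ) : EReal)
          - cTransform (fun z : X => (φ z : EReal)) (γ 1) := by
      conv_lhs => rw [← congrFun hconc (γ t)]
      exact iInf_le _ (γ 1)
    rw [hc1, ← EReal.coe_sub, EReal.coe_le_coe_iff, hdist] at hle
    nlinarith [hle]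
  refine ⟨part1, ?_⟩
  -- Part 2
  have hmem : Set.Ioc (0:ℝ) 1 ∈ nhdsWithin 0 (Set.Ioi 0) :=
    Ioc_mem_nhdsGT_of_mem (by constructor <;> norm_num)
  have hev : ∀ᶠ t in nhdsWithin (0:ℝ) (Set.Ioi 0),
      ((D * (1 - t / 2) : ℝ) : EReal)
        ≤ (((φ (γ 0) - φ (γ t)) / dist (γ 0) (γ t) : ℝ) : EReal) := by
    filter_upwards [hmem] with t ht
    rw [EReal.coe_le_coe_iff]
    have hdt : dist (γ 0) (γ t) = t * D := by
      rw [hgeod 0 (by constructor <;> norm_num) t ⟨le_of_lt ht.1, ht.2⟩,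
        abs_of_nonpos (by linarith [ht.1])]
      ring
    have h1 := part1 t ht
    have hDnn : (0:ℝ) ≤ D := dist_nonneg
    rcases eq_or_lt_of_le hDnn with hD0 | hD0
    · have : D = 0 := hD0.symm
      simp [hdt, this]
    · have htD : 0 < t * D := mul_pos ht.1 hD0
      rw [hdt, le_div_iff₀ htD]
      nlinarith [h1]
  have htend : Filter.Tendsto (fun t : ℝ => ((D * (1 - t / 2) : ℝ) : EReal))
      (nhdsWithin 0 (Set.Ioi 0)) (nhds ((D : ℝ) : EReal)) := by
    have : Filter.Tendsto (fun t : ℝ => D * (1 - t / 2)) (nhdsWithin 0 (Set.Ioi 0))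
        (nhds D) := by
      have : Filter.Tendsto (fun t : ℝ => D * (1 - t / 2)) (nhds 0) (nhds (D * (1 - 0 / 2))) :=
        Continuous.tendsto (continuous_const.mul (continuous_const.sub (continuous_id.div_const 2))) 0
      simpa using this.mono_left nhdsWithin_le_nhds
    exact (continuous_coe_real_ereal.tendsto D).comp this
  calc (D : EReal) = Filter.liminf (fun t : ℝ => ((D * (1 - t / 2) : ℝ) : EReal))
        (nhdsWithin 0 (Set.Ioi 0)) := (htend.liminf_eq).symm
    _ ≤ _ := Filter.liminf_le_liminf hev
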